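/- If X is a set of infinite regular cardinality and f : X^n → X, then f is almost unary if and only if there exists a subset of {1,...,n} with n−1 elements which is not f-wild (for n ≥ 2). -/
import Mathlib


open Cardinal

/-- `A` is `(f,a)`-wild: fixing the coordinates outside `A` according to `a`,
the set of values of `f` has cardinality `|X|`. -/
def WildFor {X : Type*} {n : ℕ} (f : (Fin n → X) → X) (A : Set (Fin n)) (a : Fin n → X) : Prop :=
  #{y : X | ∃ x : Fin n → X, (∀ i, i ∉ A → x i = a i) ∧ f x = y} = #X

/-- `A` is `f`-wild: `(f,a)`-wild for some `a`. -/
def Wild {X : Type*} {n : ℕ} (f : (Fin n → X) → X) (A : Set (Fin n)) : Prop :=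
  ∃ a : Fin n → X, WildFor f A a

/-- A function on a set of infinite regular cardinality is almost unary iff some
`(n-1)`-element set of coordinates is not `f`-wild. -/
theorem almostUnary_iff_exists_not_wild {X : Type*} {n : ℕ} (hn : 2 ≤ n)
    (hreg : (#X).IsRegular) (f : (Fin n → X) → X) :
    (∃ k : Fin n, ∃ F : X → Set X, (∀ x : X, #(F x) < #X) ∧
        ∀ x : Fin n → X, f x ∈ F (x k)) ↔
    (∃ A : Finset (Fin n), A.card = n - 1 ∧ ¬ Wild f (A : Set (Fin n))) := by
  constructor
  · rintro ⟨k, F, hF, hFf⟩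
    refine ⟨Finset.univ.erase k, ?_, ?_⟩
    · simp [Finset.card_erase_of_mem]
    · rintro ⟨a, ha⟩
      unfold WildFor at ha
      have hsub : {y : X | ∃ x : Fin n → X,
          (∀ i, i ∉ (↑(Finset.univ.erase k) : Set (Fin n)) → x i = a i) ∧ f x = y}
          ⊆ F (a k) := by
        rintro y ⟨x, hx, rfl⟩
        have hk : x k = a k := hx k (by simp)
        have := hFf x
        rwa [hk] at this
      have hlt := (Cardinal.mk_le_mk_of_subset hsub).trans_lt (hF (a k))
      rw [ha] at hlt
      exact lt_irrefl _ hlt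
  · rintro ⟨A, hA, hW⟩
    have hc : Aᶜ.card = 1 := by
      rw [Finset.card_compl, hA]
      simp only [Fintype.card_fin]
      omega
    obtain ⟨k, hk⟩ := Finset.card_eq_one.mp hc
    have hmem : ∀ i : Fin n, i ∉ A ↔ i = k := by
      intro i; rw [← Finset.mem_compl, hk, Finset.mem_singleton]
    refine ⟨k, fun c => {y | ∃ x : Fin n → X, x k = c ∧ f x = y}, ?_, fun x => ⟨x, rfl, rfl⟩⟩
    intro c
    have hne : ¬ WildFor f (↑A) (fun _ => c) := fun h => hW ⟨_, h⟩
    unfold WildFor at hne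
    have hset : {y : X | ∃ x : Fin n → X,
        (∀ i, i ∉ (↑A : Set (Fin n)) → x i = (fun _ => c) i) ∧ f x = y}
        = {y | ∃ x : Fin n → X, x k = c ∧ f x = y} := by
      ext y
      constructor
      · rintro ⟨x, hx, rfl⟩
        exact ⟨x, hx k (by simp [hmem]), rfl⟩
      · rintro ⟨x, hxk, rfl⟩
        refine ⟨x, fun i hi => ?_, rfl⟩
        rw [(hmem i).mp (by simpa using hi), hxk]
    rw [hset] at hne
    exact lt_of_le_of_ne (Cardinal.mk_set_le _) hne
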